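/- Let k ∈ ℝ. Consider the Hamiltonian H(L, Θ, P_L, P_Θ) = (1/2)(P_L²/4 + P_Θ²/L²) + L²(k/2 + 1 − cos Θ) on the phase space {L > 0} × ℝ³, with Hamilton's equations L' = P_L/4, Θ' = P_Θ/L², P_L' = P_Θ²/L³ − 2L(k/2 + 1 − cos Θ), P_Θ' = −L² sin Θ. Then the function F(L, Θ, P_L, P_Θ) = (P_L²/4 − P_Θ²/L²)cos Θ − (sin Θ/L)·P_L·P_Θ + L²(k cos Θ − 4 sin²(Θ/2)) is a first integral: for every differentiable solution (L(t), Θ(t), P_L(t), P_Θ(t)) of Hamilton's equations with L(t) > 0, the function t ↦ F(L(t), Θ(t), P_L(t), P_Θ(t)) is constant. -/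

import Mathlib

/-- The additional first integral F of the reduced zero-gravity coupled pendulum
with m = 4 and f = 0. -/
noncomputable def pendF (k L Θ PL PΘ : ℝ) : ℝ :=
  (PL ^ 2 / 4 - PΘ ^ 2 / L ^ 2) * Real.cos Θ - (Real.sin Θ / L) * PL * PΘ
    + L ^ 2 * (k * Real.cos Θ - 4 * Real.sin (Θ / 2) ^ 2)

lemma sin_half_sq (x : ℝ) : Real.sin (x / 2) ^ 2 = (1 - Real.cos x) / 2 := by
  have h := Real.sin_sq_eq_half_sub (x / 2)
  rw [show 2 * (x / 2) = x by ring] at h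
  linarith

lemma pendF_eq (k L Θ PL PΘ : ℝ) :
    pendF k L Θ PL PΘ =
      (PL ^ 2 / 4 - PΘ ^ 2 / L ^ 2) * Real.cos Θ - (Real.sin Θ / L) * PL * PΘ
        + L ^ 2 * (k * Real.cos Θ - 2 * (1 - Real.cos Θ)) := by
  rw [pendF, sin_half_sq]; ring

theorem F_is_first_integral
    (k : ℝ) (L Θ PL PΘ : ℝ → ℝ)
    (hLpos : ∀ t, 0 < L t)
    (hL : ∀ t, HasDerivAt L (PL t / 4) t)
    (hΘ : ∀ t, HasDerivAt Θ (PΘ t / L t ^ 2) t)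
    (hPL : ∀ t, HasDerivAt PL
      (PΘ t ^ 2 / L t ^ 3 - 2 * L t * (k / 2 + 1 - Real.cos (Θ t))) t)
    (hPΘ : ∀ t, HasDerivAt PΘ (-(L t ^ 2) * Real.sin (Θ t)) t) :
    ∀ t₁ t₂ : ℝ, pendF k (L t₁) (Θ t₁) (PL t₁) (PΘ t₁)
      = pendF k (L t₂) (Θ t₂) (PL t₂) (PΘ t₂) := by
  have key : ∀ t, HasDerivAt
      (fun t => pendF k (L t) (Θ t) (PL t) (PΘ t)) 0 t := by
    intro t
    have hl : L t ≠ 0 := (hLpos t).ne'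
    have hl2 : L t ^ 2 ≠ 0 := pow_ne_zero _ hl
    have hc : HasDerivAt (fun t => Real.cos (Θ t))
        (-Real.sin (Θ t) * (PΘ t / L t ^ 2)) t := (hΘ t).cos
    have hs : HasDerivAt (fun t => Real.sin (Θ t))
        (Real.cos (Θ t) * (PΘ t / L t ^ 2)) t := (hΘ t).sin
    have hA := (((hPL t).pow 2).div_const 4).sub
      (((hPΘ t).pow 2).div ((hL t).pow 2) hl2)
    have hT1 := hA.mul hc
    have hT2 := ((hs.div (hL t) hl).mul (hPL t)).mul (hPΘ t)
    have hT3 := ((hL t).pow 2).mul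
      ((hc.const_mul k).sub ((hc.const_sub 1).const_mul 2))
    have htot := (hT1.sub hT2).add hT3
    have heq : (fun t => pendF k (L t) (Θ t) (PL t) (PΘ t)) =
        fun t => (PL t ^ 2 / 4 - PΘ t ^ 2 / L t ^ 2) * Real.cos (Θ t)
          - Real.sin (Θ t) / L t * PL t * PΘ t
          + L t ^ 2 * (k * Real.cos (Θ t) - 2 * (1 - Real.cos (Θ t))) := by
      funext u; exact pendF_eq k (L u) (Θ u) (PL u) (PΘ u)
    rw [heq]
    convert htot using 1
    case e'_4 => rfl
    case e'_5 => rfl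
    case e'_8 => rfl
    have hsc := Real.sin_sq_add_cos_sq (Θ t)
    rw [show (0:ℝ) = L t * PL t * (Real.sin (Θ t) ^ 2 + Real.cos (Θ t) ^ 2 - 1) by
      rw [hsc]; ring]
    simp only [Pi.pow_apply, Pi.sub_apply, Pi.mul_apply, Pi.div_apply]
    field_simp
    ring_nf
  intro t₁ t₂
  exact is_const_of_deriv_eq_zero (fun u => (key u).differentiableAt)
    (fun u => (key u).deriv) t₁ t₂
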